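/- arXiv:2210.10701 — 2 statements merged into one kernel-verified Lean document; each statement's English description precedes it below -/
import Mathlib

section
/- Let f : X → X be continuous on a compact metric space, λ_n a probability measure, μ_n = (1/n) Σ_{h=0}^{n-1} f^h_* λ_n, and P a finite measurable partition of X. Then for all n ≥ 2 and 0 < q < n, q · H_{λ_n}(⋁_{h=0}^{n-1} f^{-h} P) ≤ n · H_{μ_n}(⋁_{i=0}^{q-1} f^{-i} P) + 2 q^2 log(Card P). -/
set_option linter.unusedSectionVars false

open MeasureTheory Filter
open scoped ENNReal

namespace MisAux
open Real

lemma gibbs {x y : ℝ} (hx : 0 ≤ x) (hy : 0 ≤ y) (h : x ≠ 0 → 0 < y) :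
    Real.negMulLog x ≤ -x * Real.log y + y - x := by
  rcases eq_or_ne x 0 with rfl | hx0
  · simpa using hy
  · have hy' := h hx0
    have hxpos : 0 < x := lt_of_le_of_ne hx (Ne.symm hx0)
    have h1 : Real.log (y / x) ≤ y / x - 1 := Real.log_le_sub_one_of_pos (by positivity)
    have h2 : Real.log (y / x) = Real.log y - Real.log x :=
      Real.log_div (ne_of_gt hy') hx0
    have h3 : x * Real.log (y / x) ≤ x * (y / x - 1) :=
      mul_le_mul_of_nonneg_left h1 hx
    have h4 : x * (y / x - 1) = y - x := by field_simp
    rw [h2] at h3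
    rw [h4] at h3
    unfold Real.negMulLog
    nlinarith

variable {X : Type*} [MeasurableSpace X]

lemma toReal_le_one (ν : Measure X) [IsProbabilityMeasure ν] (S : Set X) :
    (ν S).toReal ≤ 1 := by
  have := prob_le_one (μ := ν) (s := S)
  simpa using ENNReal.toReal_mono (by simp) this

lemma negMulLog_meas_nonneg (ν : Measure X) [IsProbabilityMeasure ν] (S : Set X) :
    0 ≤ Real.negMulLog ((ν S).toReal) :=
  Real.negMulLog_nonneg ENNReal.toReal_nonneg (toReal_le_one ν S)

lemma partEntropy_nonneg {ι : Type*} [Fintype ι] (ν : Measure X) [IsProbabilityMeasure ν]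
    (Q : ι → Set X) : 0 ≤ ∑ i, Real.negMulLog ((ν (Q i)).toReal) :=
  Finset.sum_nonneg fun i _ => negMulLog_meas_nonneg ν (Q i)

/-- marginal: for a partition `Q`, `∑ i, ν (S ∩ Q i) = ν S` (in ℝ). -/
lemma marginal {ι : Type*} [Fintype ι] (ν : Measure X) [IsProbabilityMeasure ν]
    (Q : ι → Set X) (hm : ∀ i, MeasurableSet (Q i))
    (hd : Pairwise (Function.onFun Disjoint Q)) (hc : (⋃ i, Q i) = Set.univ)
    (S : Set X) (hS : MeasurableSet S) :
    ∑ i, (ν (S ∩ Q i)).toReal = (ν S).toReal := by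
  have h1 : S = ⋃ i, S ∩ Q i := by
    rw [← Set.inter_iUnion, hc, Set.inter_univ]
  have h2 : ν S = ∑ i, ν (S ∩ Q i) := by
    conv_lhs => rw [h1]
    rw [measure_iUnion (fun i j hij => (hd hij).mono Set.inter_subset_right
      Set.inter_subset_right) (fun i => hS.inter (hm i)), tsum_fintype]
  rw [h2, ENNReal.toReal_sum (fun i _ => measure_ne_top ν _)]


/-- Entropy comparison under an injective reindexing with equal measures. -/
lemma entropy_le_of_inj {ι κ : Type*} [Fintype ι] [Fintype κ]
    (ν ρ : Measure X) [IsProbabilityMeasure ρ]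
    (C : ι → Set X) (D : κ → Set X) (g : ι → κ) (hg : Function.Injective g)
    (h : ∀ c, ν (C c) = ρ (D (g c))) :
    ∑ c, Real.negMulLog ((ν (C c)).toReal) ≤ ∑ d, Real.negMulLog ((ρ (D d)).toReal) := by
  classical
  have h1 : ∑ c, Real.negMulLog ((ν (C c)).toReal)
      = ∑ d ∈ Finset.univ.image g, Real.negMulLog ((ρ (D d)).toReal) := by
    rw [Finset.sum_image (fun a _ b _ hab => hg hab)]
    exact Finset.sum_congr rfl fun c _ => by rw [h c]
  rw [h1]
  exact Finset.sum_le_sum_of_subset_of_nonneg (Finset.subset_univ _)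
    (fun d _ _ => negMulLog_meas_nonneg ρ (D d))

/-- For a partition of a probability space, the total mass is 1. -/
lemma part_sum_one {ι : Type*} [Fintype ι] (ν : Measure X) [IsProbabilityMeasure ν]
    (Q : ι → Set X) (hm : ∀ i, MeasurableSet (Q i))
    (hd : Pairwise (Function.onFun Disjoint Q)) (hc : (⋃ i, Q i) = Set.univ) :
    ∑ i, (ν (Q i)).toReal = 1 := by
  have := marginal ν Q hm hd hc Set.univ MeasurableSet.univ
  simpa [Set.univ_inter] using this

/-- Entropy of a partition is at most `log (card ι)`. -/
lemma entropy_le_log_card {ι : Type*} [Fintype ι] [Nonempty ι]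
    (ν : Measure X) [IsProbabilityMeasure ν]
    (Q : ι → Set X) (hm : ∀ i, MeasurableSet (Q i))
    (hd : Pairwise (Function.onFun Disjoint Q)) (hc : (⋃ i, Q i) = Set.univ) :
    ∑ i, Real.negMulLog ((ν (Q i)).toReal) ≤ Real.log (Fintype.card ι) := by
  have hcard : (0 : ℝ) < (Fintype.card ι : ℝ) := by
    exact_mod_cast Fintype.card_pos
  have hsum := part_sum_one ν Q hm hd hc
  have key : ∀ i : ι, Real.negMulLog ((ν (Q i)).toReal)
      ≤ (ν (Q i)).toReal * Real.log (Fintype.card ι)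
        + ((Fintype.card ι : ℝ))⁻¹ - (ν (Q i)).toReal := by
    intro i
    have := gibbs (x := (ν (Q i)).toReal) (y := ((Fintype.card ι : ℝ))⁻¹)
      ENNReal.toReal_nonneg (by positivity) (fun _ => by positivity)
    rw [Real.log_inv] at this
    nlinarith [this]
  calc ∑ i, Real.negMulLog ((ν (Q i)).toReal)
      ≤ ∑ i, ((ν (Q i)).toReal * Real.log (Fintype.card ι)
          + ((Fintype.card ι : ℝ))⁻¹ - (ν (Q i)).toReal) :=
        Finset.sum_le_sum fun i _ => key i
    _ = (∑ i, (ν (Q i)).toReal) * Real.log (Fintype.card ι)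
          + (Fintype.card ι : ℝ) * ((Fintype.card ι : ℝ))⁻¹
          - ∑ i, (ν (Q i)).toReal := by
        rw [Finset.sum_sub_distrib, Finset.sum_add_distrib, ← Finset.sum_mul]
        simp [Finset.card_univ]
    _ = Real.log (Fintype.card ι) := by
        rw [hsum, one_mul, mul_inv_cancel₀ (ne_of_gt hcard)]
        ring

/-- Subadditivity of entropy for the join of two partitions. -/
lemma entropy_prod_le {α β : Type*} [Fintype α] [Fintype β]
    (ν : Measure X) [IsProbabilityMeasure ν]
    (A : α → Set X) (B : β → Set X)
    (hAm : ∀ a, MeasurableSet (A a)) (hAd : Pairwise (Function.onFun Disjoint A))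
    (hAc : (⋃ a, A a) = Set.univ)
    (hBm : ∀ b, MeasurableSet (B b)) (hBd : Pairwise (Function.onFun Disjoint B))
    (hBc : (⋃ b, B b) = Set.univ) :
    ∑ pr : α × β, Real.negMulLog ((ν (A pr.1 ∩ B pr.2)).toReal)
      ≤ ∑ a, Real.negMulLog ((ν (A a)).toReal)
        + ∑ b, Real.negMulLog ((ν (B b)).toReal) := by
  set w : α → ℝ := fun a => (ν (A a)).toReal with hw
  set v : β → ℝ := fun b => (ν (B b)).toReal with hv
  set p : α → β → ℝ := fun a b => (ν (A a ∩ B b)).toReal with hp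
  have hp0 : ∀ a b, 0 ≤ p a b := fun a b => ENNReal.toReal_nonneg
  have hw0 : ∀ a, 0 ≤ w a := fun a => ENNReal.toReal_nonneg
  have hv0 : ∀ b, 0 ≤ v b := fun b => ENNReal.toReal_nonneg
  have hmargA : ∀ a, ∑ b, p a b = w a := fun a =>
    marginal ν B hBm hBd hBc (A a) (hAm a)
  have hmargB : ∀ b, ∑ a, p a b = v b := by
    intro b
    have h1 : ∀ a, p a b = (ν (B b ∩ A a)).toReal := fun a => by
      rw [hp]; simp [Set.inter_comm]
    simp_rw [h1]
    exact marginal ν A hAm hAd hAc (B b) (hBm b)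
  have hsumw : ∑ a, w a = 1 := part_sum_one ν A hAm hAd hAc
  have hsumv : ∑ b, v b = 1 := part_sum_one ν B hBm hBd hBc
  have hplew : ∀ a b, p a b ≤ w a := fun a b =>
    ENNReal.toReal_mono (measure_ne_top ν _) (measure_mono Set.inter_subset_left)
  have hplev : ∀ a b, p a b ≤ v b := fun a b =>
    ENNReal.toReal_mono (measure_ne_top ν _) (measure_mono Set.inter_subset_right)
  have key : ∀ a b, Real.negMulLog (p a b)
      ≤ -(p a b) * Real.log (w a) + -(p a b) * Real.log (v b) + (w a * v b - p a b) := by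
    intro a b
    have hg := gibbs (x := p a b) (y := w a * v b) (hp0 a b)
      (mul_nonneg (hw0 a) (hv0 b)) ?_
    · rcases eq_or_ne (p a b) 0 with h0 | h0
      · rw [h0] at hg ⊢
        simpa using hg
      · have hwa : 0 < w a := lt_of_lt_of_le (lt_of_le_of_ne (hp0 a b) (Ne.symm h0)) (hplew a b)
        have hvb : 0 < v b := lt_of_lt_of_le (lt_of_le_of_ne (hp0 a b) (Ne.symm h0)) (hplev a b)
        rw [Real.log_mul (ne_of_gt hwa) (ne_of_gt hvb)] at hg
        nlinarith [hg]
    · intro h0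
      have hwa : 0 < w a := lt_of_lt_of_le (lt_of_le_of_ne (hp0 a b) (Ne.symm h0)) (hplew a b)
      have hvb : 0 < v b := lt_of_lt_of_le (lt_of_le_of_ne (hp0 a b) (Ne.symm h0)) (hplev a b)
      exact mul_pos hwa hvb
  have e1 : ∑ a, ∑ b, (-(p a b) * Real.log (w a)) = ∑ a, Real.negMulLog (w a) := by
    refine Finset.sum_congr rfl fun a _ => ?_
    have hb : ∑ b, -(p a b) = -(w a) := by
      rw [Finset.sum_neg_distrib, hmargA a]
    rw [← Finset.sum_mul, hb]
    rfl
  have e2 : ∑ a, ∑ b, (-(p a b) * Real.log (v b)) = ∑ b, Real.negMulLog (v b) := by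
    rw [Finset.sum_comm]
    refine Finset.sum_congr rfl fun b _ => ?_
    have ha : ∑ a, -(p a b) = -(v b) := by
      rw [Finset.sum_neg_distrib, hmargB b]
    rw [← Finset.sum_mul, ha]
    rfl
  have e3 : ∑ a, ∑ b, (w a * v b - p a b) = 0 := by
    refine Finset.sum_eq_zero fun a _ => ?_
    rw [Finset.sum_sub_distrib, ← Finset.mul_sum, hsumv, hmargA a, mul_one, sub_self]
  calc ∑ pr : α × β, Real.negMulLog ((ν (A pr.1 ∩ B pr.2)).toReal)
      = ∑ a, ∑ b, Real.negMulLog (p a b) := Fintype.sum_prod_type _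
    _ ≤ ∑ a, ∑ b, (-(p a b) * Real.log (w a) + -(p a b) * Real.log (v b)
          + (w a * v b - p a b)) :=
        Finset.sum_le_sum fun a _ => Finset.sum_le_sum fun b _ => key a b
    _ = ∑ a, ∑ b, (-(p a b) * Real.log (w a)) + ∑ a, ∑ b, (-(p a b) * Real.log (v b))
          + ∑ a, ∑ b, (w a * v b - p a b) := by
        simp_rw [Finset.sum_add_distrib]
    _ = ∑ a, Real.negMulLog (w a) + ∑ b, Real.negMulLog (v b) := by
        rw [e1, e2, e3, add_zero]

section Dyn

variable {ι : Type*} [Fintype ι]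
variable (f : X → X) (P : ι → Set X)

/-- The join partition over a finite set of times. -/
def JQ (s : Finset ℕ) (a : ↥s → ι) : Set X := ⋂ h : ↥s, f^[(h : ℕ)] ⁻¹' P (a h)

/-- The entropy of the join partition over a finite set of times. -/
noncomputable def EE (ν : Measure X) (s : Finset ℕ) : ℝ :=
  ∑ a : ↥s → ι, Real.negMulLog ((ν (JQ f P s a)).toReal)

variable {f P}
variable (hfm : Measurable f) (hPm : ∀ i, MeasurableSet (P i))
  (hPd : Pairwise (Function.onFun Disjoint P)) (hPc : (⋃ i, P i) = Set.univ)

include hfm hPm in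
lemma JQ_meas (s : Finset ℕ) (a : ↥s → ι) : MeasurableSet (JQ f P s a) :=
  MeasurableSet.iInter fun h => (hfm.iterate (h : ℕ)) (hPm (a h))

include hPd in
lemma JQ_disj (s : Finset ℕ) : Pairwise (Function.onFun Disjoint (JQ f P s)) := by
  intro a a' hne
  have hex : ∃ h : ↥s, a h ≠ a' h := by
    by_contra hcon
    push_neg at hcon
    exact hne (funext hcon)
  obtain ⟨h, hh⟩ := hex
  refine Set.disjoint_left.mpr fun x hx hx' => ?_
  have h1 : x ∈ f^[(h : ℕ)] ⁻¹' P (a h) := Set.mem_iInter.mp hx h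
  have h2 : x ∈ f^[(h : ℕ)] ⁻¹' P (a' h) := Set.mem_iInter.mp hx' h
  exact Set.disjoint_left.mp (hPd hh) h1 h2

include hPc in
lemma JQ_cover (s : Finset ℕ) : (⋃ a, JQ f P s a) = Set.univ := by
  ext x
  simp only [Set.mem_iUnion, Set.mem_univ, iff_true]
  have hex : ∀ y : X, ∃ i, y ∈ P i := fun y =>
    Set.mem_iUnion.mp (by rw [hPc]; trivial)
  exact ⟨fun h => Classical.choose (hex (f^[(h : ℕ)] x)),
    Set.mem_iInter.mpr fun h => Classical.choose_spec (hex (f^[(h : ℕ)] x))⟩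

lemma EE_nonneg (ν : Measure X) [IsProbabilityMeasure ν] (s : Finset ℕ) :
    0 ≤ EE f P ν s :=
  partEntropy_nonneg ν (JQ f P s)

include hfm hPm hPd hPc in
lemma EE_union_le (ν : Measure X) [IsProbabilityMeasure ν] (s t : Finset ℕ) :
    EE f P ν (s ∪ t) ≤ EE f P ν s + EE f P ν t := by
  classical
  set g : (↥(s ∪ t) → ι) → (↥s → ι) × (↥t → ι) :=
    fun a => (fun h => a ⟨h, Finset.mem_union_left _ h.2⟩,
              fun h => a ⟨h, Finset.mem_union_right _ h.2⟩) with hgdef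
  have hginj : Function.Injective g := by
    intro a a' he
    funext h
    rcases Finset.mem_union.mp h.2 with hs | ht
    · exact congrFun (congrArg Prod.fst he) ⟨h.1, hs⟩
    · exact congrFun (congrArg Prod.snd he) ⟨h.1, ht⟩
  have hset : ∀ a, JQ f P (s ∪ t) a = JQ f P s (g a).1 ∩ JQ f P t (g a).2 := by
    intro a
    ext x
    simp only [JQ, Set.mem_iInter, Set.mem_inter_iff, Set.mem_preimage]
    constructor
    · intro hx
      exact ⟨fun h => hx ⟨h.1, Finset.mem_union_left _ h.2⟩,
             fun h => hx ⟨h.1, Finset.mem_union_right _ h.2⟩⟩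
    · rintro ⟨h1, h2⟩ h
      rcases Finset.mem_union.mp h.2 with hs | ht
      · exact h1 ⟨h.1, hs⟩
      · exact h2 ⟨h.1, ht⟩
  calc EE f P ν (s ∪ t)
      ≤ ∑ pr : (↥s → ι) × (↥t → ι),
          Real.negMulLog ((ν (JQ f P s pr.1 ∩ JQ f P t pr.2)).toReal) :=
        entropy_le_of_inj ν ν _ _ g hginj (fun c => by rw [hset c])
    _ ≤ EE f P ν s + EE f P ν t :=
        entropy_prod_le ν _ _ (JQ_meas hfm hPm s) (JQ_disj hPd s) (JQ_cover hPc s)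
          (JQ_meas hfm hPm t) (JQ_disj hPd t) (JQ_cover hPc t)

include hfm hPm hPd hPc in
lemma EE_biUnion_le {κ : Type*} [DecidableEq κ] (ν : Measure X) [IsProbabilityMeasure ν]
    (s : Finset κ) (B : κ → Finset ℕ) :
    EE f P ν (s.biUnion B) ≤ ∑ r ∈ s, EE f P ν (B r) := by
  classical
  induction s using Finset.cons_induction with
  | empty =>
    simp only [Finset.biUnion_empty, Finset.sum_empty]
    have : ∀ a : ↥(∅ : Finset ℕ) → ι, JQ f P ∅ a = Set.univ := by
      intro a
      rw [JQ]
      exact Set.iInter_of_empty _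
    rw [EE]
    refine le_of_eq (Finset.sum_eq_zero fun a _ => ?_)
    rw [this a]
    simp
  | cons r s hr ih =>
    rw [Finset.cons_eq_insert, Finset.biUnion_insert, Finset.sum_insert hr]
    calc EE f P ν (B r ∪ s.biUnion B)
        ≤ EE f P ν (B r) + EE f P ν (s.biUnion B) :=
          EE_union_le hfm hPm hPd hPc ν _ _
      _ ≤ EE f P ν (B r) + ∑ r ∈ s, EE f P ν (B r) := by linarith [ih]

include hfm hPm hPd hPc in
lemma EE_le_card_mul [Nonempty ι] (ν : Measure X) [IsProbabilityMeasure ν] (s : Finset ℕ) :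
    EE f P ν s ≤ (s.card : ℝ) * Real.log (Fintype.card ι) := by
  classical
  have h := entropy_le_log_card ν (JQ f P s) (JQ_meas hfm hPm s) (JQ_disj hPd s)
    (JQ_cover hPc s)
  have hcard : Fintype.card (↥s → ι) = Fintype.card ι ^ s.card := by
    rw [Fintype.card_fun, Fintype.card_coe]
  rw [hcard] at h
  calc EE f P ν s ≤ Real.log ((Fintype.card ι ^ s.card : ℕ) : ℝ) := h
    _ = (s.card : ℝ) * Real.log (Fintype.card ι) := by
        rw [Nat.cast_pow, Real.log_pow]

include hfm hPm in
lemma EE_shift (ν : Measure X) [IsProbabilityMeasure ν] (k m : ℕ) :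
    EE f P ν ((Finset.range m).image (· + k))
      ≤ EE f P (Measure.map (f^[k]) ν) (Finset.range m) := by
  classical
  haveI : IsProbabilityMeasure (Measure.map (f^[k]) ν) :=
    Measure.isProbabilityMeasure_map (hfm.iterate k).aemeasurable
  set g : (↥((Finset.range m).image (· + k)) → ι) → (↥(Finset.range m) → ι) :=
    fun b i => b ⟨(i : ℕ) + k, Finset.mem_image.mpr ⟨(i : ℕ), i.2, rfl⟩⟩ with hgdef
  have hginj : Function.Injective g := by
    intro b b' he
    funext h
    obtain ⟨i, hi, hik⟩ := Finset.mem_image.mp h.2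
    have heq : h = ⟨i + k, Finset.mem_image.mpr ⟨i, hi, rfl⟩⟩ := Subtype.ext hik.symm
    rw [heq]
    exact congrFun he ⟨i, hi⟩
  refine entropy_le_of_inj ν _ _ _ g hginj fun b => ?_
  rw [Measure.map_apply (hfm.iterate k) (JQ_meas hfm hPm _ _)]
  congr 1
  ext x
  simp only [JQ, Set.mem_iInter, Set.mem_preimage]
  constructor
  · intro hx i
    have := hx ⟨(i : ℕ) + k, Finset.mem_image.mpr ⟨(i : ℕ), i.2, rfl⟩⟩
    rwa [Function.iterate_add_apply] at this
  · intro hx h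
    obtain ⟨i, hi, hik⟩ := Finset.mem_image.mp h.2
    have heq : h = ⟨i + k, Finset.mem_image.mpr ⟨i, hi, rfl⟩⟩ := Subtype.ext hik.symm
    rw [heq]
    have := hx ⟨i, hi⟩
    rwa [← Function.iterate_add_apply] at this

include hfm in
lemma EE_avg (lam : Measure X) [IsProbabilityMeasure lam] (n : ℕ) (hn : 0 < n)
    (μ : Measure X)
    (hμ : μ = (n : ℝ≥0∞)⁻¹ • ∑ k ∈ Finset.range n, Measure.map (f^[k]) lam)
    (s : Finset ℕ) :
    ∑ k ∈ Finset.range n, EE f P (Measure.map (f^[k]) lam) s ≤ (n : ℝ) * EE f P μ s := by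
  classical
  haveI hmaps : ∀ k : ℕ, IsProbabilityMeasure (Measure.map (f^[k]) lam) := fun k =>
    Measure.isProbabilityMeasure_map (hfm.iterate k).aemeasurable
  have hnR : (0 : ℝ) < (n : ℝ) := by exact_mod_cast hn
  have happ : ∀ S : Set X, (μ S).toReal
      = ∑ k ∈ Finset.range n, (n : ℝ)⁻¹ * ((Measure.map (f^[k]) lam) S).toReal := by
    intro S
    have h1 : ((n : ℝ≥0∞)⁻¹).toReal = (n : ℝ)⁻¹ := by
      rw [ENNReal.toReal_inv]
      simp
    rw [hμ, Measure.smul_apply, Measure.finset_sum_apply, smul_eq_mul, ENNReal.toReal_mul, h1,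
      ENNReal.toReal_sum (fun k _ => measure_ne_top _ _), Finset.mul_sum]
  have key : ∀ a : ↥s → ι,
      ∑ k ∈ Finset.range n,
        (n : ℝ)⁻¹ * Real.negMulLog (((Measure.map (f^[k]) lam) (JQ f P s a)).toReal)
      ≤ Real.negMulLog ((μ (JQ f P s a)).toReal) := by
    intro a
    have hj := Real.concaveOn_negMulLog.le_map_sum (t := Finset.range n)
      (w := fun _ => (n : ℝ)⁻¹)
      (p := fun k => ((Measure.map (f^[k]) lam) (JQ f P s a)).toReal)
      (fun k _ => by positivity)
      (by rw [Finset.sum_const, Finset.card_range, nsmul_eq_mul,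
            mul_inv_cancel₀ (ne_of_gt hnR)])
      (fun k _ => Set.mem_Ici.mpr ENNReal.toReal_nonneg)
    rw [happ]
    simpa [smul_eq_mul] using hj
  have main : ∑ k ∈ Finset.range n, (n : ℝ)⁻¹ * EE f P (Measure.map (f^[k]) lam) s
      ≤ EE f P μ s := by
    calc ∑ k ∈ Finset.range n, (n : ℝ)⁻¹ * EE f P (Measure.map (f^[k]) lam) s
        = ∑ a : ↥s → ι, ∑ k ∈ Finset.range n,
            (n : ℝ)⁻¹ * Real.negMulLog (((Measure.map (f^[k]) lam) (JQ f P s a)).toReal) := by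
          rw [Finset.sum_comm]
          refine Finset.sum_congr rfl fun k _ => ?_
          rw [EE, Finset.mul_sum]
      _ ≤ ∑ a : ↥s → ι, Real.negMulLog ((μ (JQ f P s a)).toReal) :=
          Finset.sum_le_sum fun a _ => key a
      _ = EE f P μ s := rfl
  calc ∑ k ∈ Finset.range n, EE f P (Measure.map (f^[k]) lam) s
      = (n : ℝ) * ∑ k ∈ Finset.range n, (n : ℝ)⁻¹ * EE f P (Measure.map (f^[k]) lam) s := by
        rw [Finset.mul_sum]
        refine Finset.sum_congr rfl fun k _ => ?_
        field_simp
    _ ≤ (n : ℝ) * EE f P μ s := mul_le_mul_of_nonneg_left main (le_of_lt hnR)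

end Dyn

end MisAux

/-- The (Shannon) entropy of a finite measurable partition `P` under `ν`. -/
noncomputable def partEntropy {X : Type*} [MeasurableSpace X] {ι : Type*} [Fintype ι]
    (ν : Measure X) (P : ι → Set X) : ℝ :=
  ∑ i, Real.negMulLog ((ν (P i)).toReal)

lemma MisAux.sum_reindex (g : ℕ → ℝ) (hg : ∀ k, 0 ≤ g k) (n q : ℕ) (hq : 0 < q) :
    ∑ j ∈ Finset.range q, ∑ r ∈ Finset.range ((n - j) / q), g (j + r * q)
      ≤ ∑ k ∈ Finset.range n, g k := by
  classical
  set T := (Finset.range q).sigma (fun j => Finset.range ((n - j) / q)) with hT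
  have hinj : ∀ p ∈ T, ∀ p' ∈ T,
      p.1 + p.2 * q = p'.1 + p'.2 * q → p = p' := by
    intro p hp p' hp' he
    simp only [hT, Finset.mem_sigma, Finset.mem_range] at hp hp'
    have h1 : (p.1 + p.2 * q) % q = p.1 % q := Nat.add_mul_mod_self_right _ _ _
    have h2 : (p'.1 + p'.2 * q) % q = p'.1 % q := Nat.add_mul_mod_self_right _ _ _
    have h3 : p.1 % q = p.1 := Nat.mod_eq_of_lt hp.1
    have h4 : p'.1 % q = p'.1 := Nat.mod_eq_of_lt hp'.1
    have hj : p.1 = p'.1 := by rw [← h3, ← h1, he, h2, h4]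
    have hr : p.2 * q = p'.2 * q := by omega
    have hr2 : p.2 = p'.2 := Nat.eq_of_mul_eq_mul_right hq hr
    exact Sigma.ext hj (heq_of_eq hr2)
  have himg : T.image (fun p => p.1 + p.2 * q) ⊆ Finset.range n := by
    intro m hm
    obtain ⟨p, hp, rfl⟩ := Finset.mem_image.mp hm
    simp only [hT, Finset.mem_sigma, Finset.mem_range] at hp
    obtain ⟨hp1, hp2⟩ := hp
    have hdq : ((n - p.1) / q) * q ≤ n - p.1 := Nat.div_mul_le_self _ _
    have h1 : (p.2 + 1) * q ≤ ((n - p.1) / q) * q := Nat.mul_le_mul_right q hp2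
    have h3 : (p.2 + 1) * q = p.2 * q + q := by ring
    exact Finset.mem_range.mpr (by omega)
  calc ∑ j ∈ Finset.range q, ∑ r ∈ Finset.range ((n - j) / q), g (j + r * q)
      = ∑ p ∈ T, g (p.1 + p.2 * q) := by rw [hT, Finset.sum_sigma]
    _ = ∑ k ∈ T.image (fun p => p.1 + p.2 * q), g k := (Finset.sum_image hinj).symm
    _ ≤ ∑ k ∈ Finset.range n, g k :=
        Finset.sum_le_sum_of_subset_of_nonneg himg (fun k _ _ => hg k)

set_option maxHeartbeats 1000000 in
/-- Misiurewicz's lemma relating the entropy of the refined partition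
under `λ_n` with the entropy under the averaged pushforwards `μ_n`. -/
theorem stmt_1 {X : Type*} [MetricSpace X] [CompactSpace X] [MeasurableSpace X]
    [BorelSpace X]
    (f : X → X) (hf : Continuous f)
    {ι : Type*} [Fintype ι] (P : ι → Set X)
    (hmeas : ∀ i, MeasurableSet (P i))
    (hdisj : Pairwise (Function.onFun Disjoint P))
    (hcover : (⋃ i, P i) = Set.univ)
    (lam : Measure X) (hlam : IsProbabilityMeasure lam)
    (n q : ℕ) (hn : 2 ≤ n) (hq : 0 < q) (hqn : q < n)
    (μ : Measure X)
    (hμ : μ = (n : ℝ≥0∞)⁻¹ • ∑ k ∈ Finset.range n, Measure.map (f^[k]) lam) :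
    (q : ℝ) * partEntropy lam
        (fun a : Fin n → ι => ⋂ h : Fin n, f^[(h : ℕ)] ⁻¹' P (a h))
      ≤ (n : ℝ) * partEntropy μ
          (fun a : Fin q → ι => ⋂ i : Fin q, f^[(i : ℕ)] ⁻¹' P (a i))
        + 2 * (q : ℝ) ^ 2 * Real.log (Fintype.card ι) := by
  classical
  haveI := hlam
  have hfm : Measurable f := hf.measurable
  haveI hXne : Nonempty X := by
    by_contra h
    rw [not_nonempty_iff] at h
    have h1 : lam Set.univ = 1 := measure_univ
    rw [Set.univ_eq_empty_iff.mpr h] at h1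
    simp at h1
  haveI hιne : Nonempty ι := by
    obtain ⟨x⟩ := hXne
    obtain ⟨i, _⟩ := Set.mem_iUnion.mp (hcover ▸ Set.mem_univ x)
    exact ⟨i⟩
  haveI hmaps : ∀ k : ℕ, IsProbabilityMeasure (Measure.map (f^[k]) lam) := fun k =>
    Measure.isProbabilityMeasure_map (hfm.iterate k).aemeasurable
  haveI hμprob : IsProbabilityMeasure μ := by
    constructor
    have h2 : ∀ k ∈ Finset.range n, (Measure.map (f^[k]) lam) Set.univ = 1 := fun k _ =>
      measure_univ
    rw [hμ, Measure.smul_apply, Measure.finset_sum_apply, smul_eq_mul,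
      Finset.sum_congr rfl h2, Finset.sum_const, Finset.card_range, nsmul_eq_mul, mul_one,
      ENNReal.inv_mul_cancel (Nat.cast_ne_zero.mpr (by omega)) (by simp)]
  set L := Real.log (Fintype.card ι) with hLdef
  have hL : 0 ≤ L := Real.log_nonneg (by exact_mod_cast Fintype.card_pos)
  -- bridges between `Fin`-indexed partitions and `Finset.range`-indexed ones
  have bridge1 : partEntropy lam (fun a : Fin n → ι => ⋂ h : Fin n, f^[(h : ℕ)] ⁻¹' P (a h))
      ≤ MisAux.EE f P lam (Finset.range n) := by
    refine MisAux.entropy_le_of_inj lam lam _ _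
      (fun (a : Fin n → ι) (h : ↥(Finset.range n)) => a ⟨h.1, Finset.mem_range.mp h.2⟩)
      ?_ ?_
    · intro a a' he
      funext i
      exact congrFun he ⟨i.1, Finset.mem_range.mpr i.2⟩
    · intro a
      congr 1
      ext x
      simp only [Set.mem_iInter, Set.mem_preimage, MisAux.JQ]
      constructor
      · intro hx h
        exact hx ⟨h.1, Finset.mem_range.mp h.2⟩
      · intro hx i
        exact hx ⟨i.1, Finset.mem_range.mpr i.2⟩
  have bridge2 : MisAux.EE f P μ (Finset.range q)
      ≤ partEntropy μ (fun a : Fin q → ι => ⋂ i : Fin q, f^[(i : ℕ)] ⁻¹' P (a i)) := by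
    refine MisAux.entropy_le_of_inj μ μ _ _
      (fun (b : ↥(Finset.range q) → ι) (i : Fin q) => b ⟨i.1, Finset.mem_range.mpr i.2⟩)
      ?_ ?_
    · intro b b' he
      funext h
      have := congrFun he ⟨h.1, Finset.mem_range.mp h.2⟩
      exact this
    · intro b
      congr 1
      ext x
      simp only [Set.mem_iInter, Set.mem_preimage, MisAux.JQ]
      constructor
      · intro hx i
        exact hx ⟨i.1, Finset.mem_range.mpr i.2⟩
      · intro hx h
        exact hx ⟨h.1, Finset.mem_range.mp h.2⟩
  -- per-`j` decomposition bound
  have step : ∀ j ∈ Finset.range q,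
      MisAux.EE f P lam (Finset.range n)
        ≤ (∑ r ∈ Finset.range ((n - j) / q),
            MisAux.EE f P (Measure.map (f^[j + r * q]) lam) (Finset.range q))
          + 2 * (q : ℝ) * L := by
    intro j hj
    have hjq := Finset.mem_range.mp hj
    set d := (n - j) / q with hd
    set bigU := (Finset.range d).biUnion
      (fun r => (Finset.range q).image (· + (j + r * q))) with hbigU
    have hdq : d * q ≤ n - j := Nat.div_mul_le_self _ _
    have hsub : bigU ⊆ Finset.range n := by
      intro m hm
      simp only [hbigU, Finset.mem_biUnion, Finset.mem_image, Finset.mem_range] at hm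
      obtain ⟨r, hr, i, hi, rfl⟩ := hm
      have h1 : (r + 1) * q ≤ d * q := Nat.mul_le_mul_right q hr
      have h3 : (r + 1) * q = r * q + q := by ring
      exact Finset.mem_range.mpr (by omega)
    have hcov : Finset.range n = bigU ∪ (Finset.range n \ bigU) :=
      (Finset.union_sdiff_of_subset hsub).symm
    have hcardleft : (Finset.range n \ bigU).card ≤ 2 * q := by
      have hsub2 : Finset.range n \ bigU ⊆
          Finset.range j ∪ Finset.Ico (j + d * q) n := by
        intro m hm
        obtain ⟨hmn, hmB⟩ := Finset.mem_sdiff.mp hm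
        have hmn' := Finset.mem_range.mp hmn
        rcases lt_or_ge m j with h1 | h1
        · exact Finset.mem_union_left _ (Finset.mem_range.mpr h1)
        rcases le_or_gt (j + d * q) m with h2 | h2
        · exact Finset.mem_union_right _ (Finset.mem_Ico.mpr ⟨h2, hmn'⟩)
        -- otherwise m ∈ bigU, contradiction
        exfalso
        apply hmB
        have hu : m - j < d * q := by omega
        have hrlt : (m - j) / q < d := by
          rw [Nat.div_lt_iff_lt_mul hq]
          omega
        have hmod := Nat.div_add_mod (m - j) q
        have himod : (m - j) % q < q := Nat.mod_lt _ hq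
        refine Finset.mem_biUnion.mpr ⟨(m - j) / q, Finset.mem_range.mpr hrlt, ?_⟩
        refine Finset.mem_image.mpr ⟨(m - j) % q, Finset.mem_range.mpr himod, ?_⟩
        have hcm : q * ((m - j) / q) = ((m - j) / q) * q := Nat.mul_comm _ _
        omega
      have hcu := Finset.card_le_card hsub2
      have hcu2 := Finset.card_union_le (Finset.range j) (Finset.Ico (j + d * q) n)
      rw [Finset.card_range, Nat.card_Ico] at hcu2
      have hdm := Nat.div_add_mod (n - j) q
      rw [← hd] at hdm
      have hmod := Nat.mod_lt (n - j) hq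
      have hcm : q * d = d * q := Nat.mul_comm _ _
      omega
    calc MisAux.EE f P lam (Finset.range n)
        = MisAux.EE f P lam (bigU ∪ (Finset.range n \ bigU)) := by rw [← hcov]
      _ ≤ MisAux.EE f P lam bigU + MisAux.EE f P lam (Finset.range n \ bigU) :=
          MisAux.EE_union_le hfm hmeas hdisj hcover lam _ _
      _ ≤ (∑ r ∈ Finset.range d,
            MisAux.EE f P lam ((Finset.range q).image (· + (j + r * q))))
          + 2 * (q : ℝ) * L := by
          refine add_le_add (MisAux.EE_biUnion_le hfm hmeas hdisj hcover lam _ _) ?_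
          calc MisAux.EE f P lam (Finset.range n \ bigU)
              ≤ ((Finset.range n \ bigU).card : ℝ) * L :=
                MisAux.EE_le_card_mul hfm hmeas hdisj hcover lam _
            _ ≤ 2 * (q : ℝ) * L := by
                have : ((Finset.range n \ bigU).card : ℝ) ≤ 2 * (q : ℝ) := by
                  exact_mod_cast hcardleft
                exact mul_le_mul_of_nonneg_right this hL
      _ ≤ (∑ r ∈ Finset.range d,
            MisAux.EE f P (Measure.map (f^[j + r * q]) lam) (Finset.range q))
          + 2 * (q : ℝ) * L := by
          refine add_le_add_left (Finset.sum_le_sum fun r _ => ?_) _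
          exact MisAux.EE_shift hfm hmeas lam (j + r * q) q
  -- sum the per-`j` bounds over `j < q`
  have sum_step : (q : ℝ) * MisAux.EE f P lam (Finset.range n)
      ≤ (∑ j ∈ Finset.range q, ∑ r ∈ Finset.range ((n - j) / q),
          MisAux.EE f P (Measure.map (f^[j + r * q]) lam) (Finset.range q))
        + (q : ℝ) * (2 * (q : ℝ) * L) := by
    calc (q : ℝ) * MisAux.EE f P lam (Finset.range n)
        = ∑ _j ∈ Finset.range q, MisAux.EE f P lam (Finset.range n) := by
          rw [Finset.sum_const, Finset.card_range, nsmul_eq_mul]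
      _ ≤ ∑ j ∈ Finset.range q, ((∑ r ∈ Finset.range ((n - j) / q),
            MisAux.EE f P (Measure.map (f^[j + r * q]) lam) (Finset.range q))
            + 2 * (q : ℝ) * L) := Finset.sum_le_sum step
      _ = _ := by
          rw [Finset.sum_add_distrib, Finset.sum_const, Finset.card_range, nsmul_eq_mul]
  -- re-index the double sum into `k ∈ range n`
  have inj_step : (∑ j ∈ Finset.range q, ∑ r ∈ Finset.range ((n - j) / q),
      MisAux.EE f P (Measure.map (f^[j + r * q]) lam) (Finset.range q))
      ≤ ∑ k ∈ Finset.range n, MisAux.EE f P (Measure.map (f^[k]) lam) (Finset.range q) :=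
    MisAux.sum_reindex
      (fun k => MisAux.EE f P (Measure.map (f^[k]) lam) (Finset.range q))
      (fun k => by
        haveI := hmaps k
        exact MisAux.EE_nonneg (Measure.map (f^[k]) lam) (Finset.range q))
      n q hq
  have avg := MisAux.EE_avg (P := P) hfm lam n (by omega) μ hμ (Finset.range q)
  have hq0 : (0 : ℝ) ≤ (q : ℝ) := Nat.cast_nonneg q
  have hn0 : (0 : ℝ) ≤ (n : ℝ) := Nat.cast_nonneg n
  have hsq : (q : ℝ) * (2 * (q : ℝ) * L) = 2 * (q : ℝ) ^ 2 * L := by ring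
  have final : (q : ℝ) * MisAux.EE f P lam (Finset.range n)
      ≤ (n : ℝ) * MisAux.EE f P μ (Finset.range q) + 2 * (q : ℝ) ^ 2 * L := by
    linarith [sum_step, inj_step, avg]
  calc (q : ℝ) * partEntropy lam
        (fun a : Fin n → ι => ⋂ h : Fin n, f^[(h : ℕ)] ⁻¹' P (a h))
      ≤ (q : ℝ) * MisAux.EE f P lam (Finset.range n) :=
        mul_le_mul_of_nonneg_left bridge1 hq0
    _ ≤ (n : ℝ) * MisAux.EE f P μ (Finset.range q) + 2 * (q : ℝ) ^ 2 * L := final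
    _ ≤ (n : ℝ) * partEntropy μ
          (fun a : Fin q → ι => ⋂ i : Fin q, f^[(i : ℕ)] ⁻¹' P (a i))
        + 2 * (q : ℝ) ^ 2 * L := by
        have := mul_le_mul_of_nonneg_left bridge2 hn0
        linarith
end

section
/- Let f : M → M be a C^1 diffeomorphism with a partially hyperbolic invariant set X with splitting E^u ⊕ E^{cs} and constants C₂ < 1/ρ < C₁. Then the local unstable manifold W^u_δ(x) = {y ∈ M : d(f^{−n}x, f^{−n}y) ≤ δ for all n ≥ 0 and d(f^{−n}x, f^{−n}y)/ρ^n → 0} satisfies: there exist C > 0 and λ ∈ (C₁^{−1}, 1) such that for every n ≥ 0 and y ∈ W^u_δ(x), d(f^{−n}x, f^{−n}y) ≤ C λ^n d(x, y). -/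
open Filter Topology Set

lemma taylor_unif {E : Type*} [NormedAddCommGroup E] [NormedSpace ℝ E]
    [FiniteDimensional ℝ E] (f : E → E) (hf : ContDiff ℝ 1 f)
    (X : Set E) (hX : IsCompact X) {η : ℝ} (hη : 0 < η) :
    ∃ d > (0:ℝ), ∀ z ∈ X, ∀ w : E, ‖w‖ ≤ d →
      ‖f (z + w) - f z - fderiv ℝ f z w‖ ≤ η * ‖w‖ := by
  have hTcomp : IsCompact (Metric.cthickening 1 X) := hX.cthickening
  have hcont : Continuous (fderiv ℝ f) := hf.continuous_fderiv one_ne_zero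
  have hUC : UniformContinuousOn (fderiv ℝ f) (Metric.cthickening 1 X) :=
    hTcomp.uniformContinuousOn_of_continuous hcont.continuousOn
  obtain ⟨d₀, hd₀, hUC'⟩ := Metric.uniformContinuousOn_iff_le.mp hUC η hη
  refine ⟨min (d₀/2) 1, by positivity, ?_⟩
  intro z hz w hw
  have hz' : z ∈ Metric.cthickening 1 X := Metric.self_subset_cthickening X hz
  have hd2 : ‖w‖ ≤ d₀/2 := hw.trans (min_le_left _ _)
  have hd1 : ‖w‖ ≤ 1 := hw.trans (min_le_right _ _)
  have hconv : Convex ℝ (Metric.closedBall z ‖w‖) := convex_closedBall _ _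
  have hmem : ∀ p ∈ Metric.closedBall z ‖w‖, p ∈ Metric.cthickening 1 X := by
    intro p hp
    exact Metric.mem_cthickening_of_dist_le p z 1 X hz
      ((Metric.mem_closedBall.mp hp).trans hd1)
  have hbound : ∀ p ∈ Metric.closedBall z ‖w‖,
      ‖fderiv ℝ f p - fderiv ℝ f z‖ ≤ η := by
    intro p hp
    have := hUC' p (hmem p hp) z hz' (by
      have := Metric.mem_closedBall.mp hp
      calc dist p z ≤ ‖w‖ := this
        _ ≤ d₀ := hd2.trans (by linarith)
      )
    rwa [dist_eq_norm] at this
  have hdiff : ∀ p ∈ Metric.closedBall z ‖w‖, DifferentiableAt ℝ f p := fun p _ =>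
    hf.differentiable one_ne_zero p
  have := hconv.norm_image_sub_le_of_norm_fderiv_le' hdiff hbound
    (Metric.mem_closedBall_self (norm_nonneg w))
    (show z + w ∈ Metric.closedBall z ‖w‖ by
      simp [Metric.mem_closedBall, dist_eq_norm])
  simpa using this


set_option maxHeartbeats 2000000 in
/-- exponential backward contraction inside local unstable
manifolds of a partially hyperbolic set (the unstable manifold theorem estimate):
for `δ > 0` sufficiently small there are `C > 0` and `λ ∈ (C₁⁻¹, 1)` such that
points of `W^u_δ(x)` satisfy `d(f^{-n}x, f^{-n}y) ≤ C λ^n d(x,y)`. -/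
theorem stmt_17 {E : Type*} [NormedAddCommGroup E] [InnerProductSpace ℝ E]
    [FiniteDimensional ℝ E]
    (f : E → E) (hf : ContDiff ℝ 1 f)
    (finv : E → E) (hl : Function.LeftInverse finv f)
    (hr : Function.RightInverse finv f) (hfinv : Continuous finv)
    (X : Set E) (hXcomp : IsCompact X) (hXinv : f '' X = X)
    (Eu Ecs : E → Submodule ℝ E)
    (hcompl : ∀ x ∈ X, IsCompl (Eu x) (Ecs x))
    (hmapu : ∀ x ∈ X, Submodule.map (fderiv ℝ f x : E →ₗ[ℝ] E) (Eu x) = Eu (f x))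
    (hmapcs : ∀ x ∈ X, Submodule.map (fderiv ℝ f x : E →ₗ[ℝ] E) (Ecs x) ≤ Ecs (f x))
    (C₁ C₂ : ℝ) (hC₁ : 1 < C₁) (hC₂ : 0 < C₂) (hC₂₁ : C₂ < C₁)
    (hexp : ∀ x ∈ X, ∀ v ∈ Eu x, C₁ * ‖v‖ ≤ ‖fderiv ℝ f x v‖)
    (hcs : ∀ x ∈ X, ∀ v ∈ Ecs x, ‖fderiv ℝ f x v‖ ≤ C₂ * ‖v‖)
    (ρ : ℝ) (hρ₁ : C₂ < 1 / ρ) (hρ₂ : 1 / ρ < C₁) (hρpos : 0 < ρ) :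
    ∃ δ₀ > (0 : ℝ), ∀ δ : ℝ, 0 < δ → δ ≤ δ₀ →
      ∃ C > (0 : ℝ), ∃ lam : ℝ, C₁⁻¹ < lam ∧ lam < 1 ∧
        ∀ x ∈ X, ∀ y : E,
          ((∀ n : ℕ, dist (finv^[n] x) (finv^[n] y) ≤ δ) ∧
            Tendsto (fun n : ℕ => dist (finv^[n] x) (finv^[n] y) / ρ ^ n) atTop (𝓝 0)) →
          ∀ n : ℕ, dist (finv^[n] x) (finv^[n] y) ≤ C * lam ^ n * dist x y := by
  classical
  -- uniform bound on the derivative over X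
  obtain ⟨L₀, hL₀⟩ : ∃ L₀ : ℝ, ∀ x ∈ X, ‖fderiv ℝ f x‖ ≤ L₀ :=
    hXcomp.exists_bound_of_continuousOn (hf.continuous_fderiv one_ne_zero).continuousOn
  set L : ℝ := max L₀ 0 with hLdef
  have hL' : ∀ x ∈ X, ‖fderiv ℝ f x‖ ≤ L := fun x hx => (hL₀ x hx).trans (le_max_left _ _)
  have hLnn : 0 ≤ L := le_max_right _ _
  have hgap : 0 < C₁ - C₂ := sub_pos.mpr hC₂₁
  set Q : ℝ := 2 * ((L + C₂) / (C₁ - C₂) + 1) with hQdef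
  have hKnn : 0 ≤ (L + C₂) / (C₁ - C₂) := div_nonneg (by linarith) hgap.le
  have hQ1 : 1 ≤ Q := by rw [hQdef]; linarith
  have hQpos : 0 < Q := lt_of_lt_of_le one_pos hQ1
  -- uniform projection bound
  have hproj : ∀ x ∈ X, ∀ u ∈ Eu x, ∀ s ∈ Ecs x,
      ‖u‖ ≤ Q * ‖u + s‖ ∧ ‖s‖ ≤ Q * ‖u + s‖ := by
    intro x hx u hu s hs
    have h1 : C₁ * ‖u‖ ≤ ‖fderiv ℝ f x u‖ := hexp x hx u hu
    have h2 : ‖fderiv ℝ f x s‖ ≤ C₂ * ‖s‖ := hcs x hx s hs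
    have h3 : ‖fderiv ℝ f x (u + s)‖ ≤ L * ‖u + s‖ :=
      ((fderiv ℝ f x).le_opNorm _).trans
        (mul_le_mul_of_nonneg_right (hL' x hx) (norm_nonneg _))
    have h4 : ‖fderiv ℝ f x u‖ ≤ ‖fderiv ℝ f x (u + s)‖ + ‖fderiv ℝ f x s‖ := by
      have he : fderiv ℝ f x u = fderiv ℝ f x (u + s) - fderiv ℝ f x s := by
        rw [map_add]; abel
      rw [he]; exact norm_sub_le _ _
    have h5 : ‖s‖ ≤ ‖u‖ + ‖u + s‖ := by
      have he : s = (u + s) - u := by abel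
      calc ‖s‖ = ‖(u + s) - u‖ := by rw [← he]
        _ ≤ ‖u + s‖ + ‖u‖ := norm_sub_le _ _
        _ = ‖u‖ + ‖u + s‖ := by ring
    -- C₁‖u‖ ≤ L‖u+s‖ + C₂‖s‖ ≤ L‖u+s‖ + C₂‖u‖ + C₂‖u+s‖
    have hu' : ‖u‖ * (C₁ - C₂) ≤ (L + C₂) * ‖u + s‖ := by nlinarith [norm_nonneg (u + s)]
    have hu'' : ‖u‖ ≤ (L + C₂) / (C₁ - C₂) * ‖u + s‖ := by
      rw [div_mul_eq_mul_div, le_div_iff₀ hgap]; linarith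
    have hQK : (L + C₂) / (C₁ - C₂) + 1 ≤ Q := by rw [hQdef]; linarith
    constructor
    · calc ‖u‖ ≤ (L + C₂) / (C₁ - C₂) * ‖u + s‖ := hu''
        _ ≤ Q * ‖u + s‖ := by
            apply mul_le_mul_of_nonneg_right _ (norm_nonneg _); linarith
    · calc ‖s‖ ≤ ‖u‖ + ‖u + s‖ := h5
        _ ≤ (L + C₂) / (C₁ - C₂) * ‖u + s‖ + 1 * ‖u + s‖ := by
            rw [one_mul]; linarith
        _ = ((L + C₂) / (C₁ - C₂) + 1) * ‖u + s‖ := by ring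
        _ ≤ Q * ‖u + s‖ := mul_le_mul_of_nonneg_right hQK (norm_nonneg _)
  -- choose η
  have hρinv : 0 < 1 / ρ - C₂ := sub_pos.mpr hρ₁
  set η : ℝ := min ((C₁ - C₂) / (4 * Q)) (min ((1 / ρ - C₂) / (4 * Q)) ((C₁ - 1) / (4 * Q)))
    with hηdef
  have hηpos : 0 < η := by
    rw [hηdef]
    have h1 : 0 < (C₁ - C₂) / (4 * Q) := by positivity
    have h2 : 0 < (1 / ρ - C₂) / (4 * Q) := by positivity
    have h3 : 0 < (C₁ - 1) / (4 * Q) := by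
      apply div_pos (by linarith) (by positivity)
    exact lt_min h1 (lt_min h2 h3)
  have h4Q : (0:ℝ) < 4 * Q := by positivity
  have hQη : (0:ℝ) ≤ Q * η := mul_nonneg hQpos.le hηpos.le
  have hη1 : 4 * Q * η ≤ C₁ - C₂ := by
    have h' : η ≤ (C₁ - C₂) / (4 * Q) := by
      rw [hηdef]; exact min_le_left _ _
    have := (le_div_iff₀ h4Q).mp h'
    linarith
  have hη2 : C₂ + 2 * Q * η ≤ 1 / ρ := by
    have h' : η ≤ (1 / ρ - C₂) / (4 * Q) := by
      rw [hηdef]; exact (min_le_right _ _).trans (min_le_left _ _)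
    have := (le_div_iff₀ h4Q).mp h'
    linarith
  have hη3 : 4 * Q * η ≤ C₁ - 1 := by
    have h' : η ≤ (C₁ - 1) / (4 * Q) := by
      rw [hηdef]; exact (min_le_right _ _).trans (min_le_right _ _)
    have := (le_div_iff₀ h4Q).mp h'
    linarith
  -- Taylor modulus
  obtain ⟨d, hdpos, hTay⟩ := taylor_unif f hf X hXcomp hηpos
  refine ⟨min d 1, by positivity, ?_⟩
  intro δ hδpos hδle
  set C₁' : ℝ := C₁ - 2 * Q * η with hC₁'def
  have h2Qη : 0 < 2 * Q * η := by positivity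
  have hC₁'1 : 1 < C₁' := by rw [hC₁'def]; nlinarith
  have hC₁'pos : 0 < C₁' := by linarith
  have hC₁'lt : C₁' < C₁ := by rw [hC₁'def]; linarith
  refine ⟨2 * Q, by positivity, C₁'⁻¹, ?_, ?_, ?_⟩
  · exact ((inv_lt_inv₀ (by linarith) hC₁'pos).mpr hC₁'lt)
  · exact inv_lt_one_of_one_lt₀ hC₁'1
  · intro x hx y hy n
    obtain ⟨hclose, hten⟩ := hy
    -- backward orbit
    have hinvX : ∀ p ∈ X, finv p ∈ X := by
      intro p hp
      rw [← hXinv] at hp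
      obtain ⟨q, hq, rfl⟩ := hp
      rwa [hl q]
    set z : ℕ → E := fun n => finv^[n] x with hzdef
    set Y : ℕ → E := fun n => finv^[n] y with hYdef
    have hzX : ∀ n, z n ∈ X := by
      intro n
      induction n with
      | zero => simpa [hzdef] using hx
      | succ n ih =>
        have : z (n + 1) = finv (z n) := Function.iterate_succ_apply' finv n x
        rw [this]; exact hinvX _ ih
    have hfz : ∀ n, f (z (n + 1)) = z n := by
      intro n
      have : z (n + 1) = finv (z n) := Function.iterate_succ_apply' finv n x
      rw [this, hr (z n)]
    have hfY : ∀ n, f (Y (n + 1)) = Y n := by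
      intro n
      have : Y (n + 1) = finv (Y n) := Function.iterate_succ_apply' finv n y
      rw [this, hr (Y n)]
    set w : ℕ → E := fun n => Y n - z n with hwdef
    have ha_eq : ∀ n, dist (finv^[n] x) (finv^[n] y) = ‖w n‖ := by
      intro n
      rw [dist_eq_norm]
      exact norm_sub_rev _ _
    have hwle : ∀ n, ‖w n‖ ≤ d := by
      intro n
      rw [← ha_eq n]
      exact (hclose n).trans (hδle.trans (min_le_left _ _))
    -- decomposition along the splitting
    have hdec : ∀ (n : ℕ) (v : E), ∃ p ∈ Eu (z n), ∃ q ∈ Ecs (z n), v = p + q := by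
      intro n v
      have htop : Eu (z n) ⊔ Ecs (z n) = ⊤ := (hcompl (z n) (hzX n)).sup_eq_top
      have hv : v ∈ Eu (z n) ⊔ Ecs (z n) := htop ▸ Submodule.mem_top
      obtain ⟨p, hp, q, hq, hpq⟩ := Submodule.mem_sup.mp hv
      exact ⟨p, hp, q, hq, hpq.symm⟩
    have huniq : ∀ (n : ℕ) (p q p' q' : E), p ∈ Eu (z n) → q ∈ Ecs (z n) →
        p' ∈ Eu (z n) → q' ∈ Ecs (z n) → p + q = p' + q' → p = p' ∧ q = q' := by
      intro n p q p' q' hp hq hp' hq' heq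
      have hd := (hcompl (z n) (hzX n)).disjoint
      have h1 : p - p' ∈ Eu (z n) := sub_mem hp hp'
      have h2 : p - p' = q' - q := by
        rw [sub_eq_sub_iff_add_eq_add, heq]
        exact add_comm _ _
      have h3 : p - p' ∈ Ecs (z n) := h2 ▸ sub_mem hq' hq
      have h0 : p - p' = 0 := Submodule.disjoint_def.mp hd _ h1 h3
      have hpp : p = p' := sub_eq_zero.mp h0
      refine ⟨hpp, ?_⟩
      have : q' - q = 0 := h2 ▸ h0
      have := sub_eq_zero.mp this
      exact this.symm
    choose u hu s hs hw using fun n => hdec n (w n)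
    -- key recurrences
    have hkey : ∀ n, C₁ * ‖u (n + 1)‖ - Q * (η * ‖w (n + 1)‖) ≤ ‖u n‖ ∧
        ‖s n‖ ≤ C₂ * ‖s (n + 1)‖ + Q * (η * ‖w (n + 1)‖) := by
      intro n
      set A := fderiv ℝ f (z (n + 1)) with hA
      have hTaylor : ‖w n - A (w (n + 1))‖ ≤ η * ‖w (n + 1)‖ := by
        have h1 : z (n + 1) + w (n + 1) = Y (n + 1) := by
          simp only [hwdef]; abel
        have h2 := hTay (z (n + 1)) (hzX (n + 1)) (w (n + 1)) (hwle (n + 1))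
        rw [h1, hfY n, hfz n] at h2
        have h3 : Y n - z n - A (w (n + 1)) = w n - A (w (n + 1)) := by
          simp only [hwdef]
        rwa [h3] at h2
      obtain ⟨ru, hru, rs, hrs, hrsum⟩ := hdec n (w n - A (w (n + 1)))
      have hbnd := hproj (z n) (hzX n) ru hru rs hrs
      rw [← hrsum] at hbnd
      have hrub : ‖ru‖ ≤ Q * (η * ‖w (n + 1)‖) := by
        calc ‖ru‖ ≤ Q * ‖w n - A (w (n + 1))‖ := hbnd.1
          _ ≤ Q * (η * ‖w (n + 1)‖) := mul_le_mul_of_nonneg_left hTaylor hQpos.le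
      have hrsb : ‖rs‖ ≤ Q * (η * ‖w (n + 1)‖) := by
        calc ‖rs‖ ≤ Q * ‖w n - A (w (n + 1))‖ := hbnd.2
          _ ≤ Q * (η * ‖w (n + 1)‖) := mul_le_mul_of_nonneg_left hTaylor hQpos.le
      have hAu : A (u (n + 1)) ∈ Eu (z n) := by
        have hm := hmapu (z (n + 1)) (hzX (n + 1))
        rw [hfz n] at hm
        rw [← hm]
        exact Submodule.mem_map_of_mem (hu (n + 1))
      have hAs : A (s (n + 1)) ∈ Ecs (z n) := by
        have hm := hmapcs (z (n + 1)) (hzX (n + 1))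
        rw [hfz n] at hm
        exact hm (Submodule.mem_map_of_mem (hs (n + 1)))
      have hid : u n + s n = (A (u (n + 1)) + ru) + (A (s (n + 1)) + rs) := by
        have e1 : w n = A (w (n + 1)) + (w n - A (w (n + 1))) := by abel
        have e2 : A (w (n + 1)) = A (u (n + 1)) + A (s (n + 1)) := by
          rw [hw (n + 1), map_add]
        calc u n + s n = w n := (hw n).symm
          _ = A (w (n + 1)) + (w n - A (w (n + 1))) := e1
          _ = (A (u (n + 1)) + A (s (n + 1))) + (ru + rs) := by rw [← e2, ← hrsum]
          _ = (A (u (n + 1)) + ru) + (A (s (n + 1)) + rs) := by abel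
      obtain ⟨hueq, hseq⟩ := huniq n (u n) (s n) (A (u (n + 1)) + ru) (A (s (n + 1)) + rs)
        (hu n) (hs n) (Submodule.add_mem _ hAu hru) (Submodule.add_mem _ hAs hrs) hid
      constructor
      · have h6 : C₁ * ‖u (n + 1)‖ ≤ ‖A (u (n + 1))‖ :=
          hexp (z (n + 1)) (hzX (n + 1)) (u (n + 1)) (hu (n + 1))
        have h7 : ‖A (u (n + 1))‖ ≤ ‖A (u (n + 1)) + ru‖ + ‖ru‖ := by
          calc ‖A (u (n + 1))‖ = ‖(A (u (n + 1)) + ru) - ru‖ := by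
                rw [add_sub_cancel_right]
            _ ≤ ‖A (u (n + 1)) + ru‖ + ‖ru‖ := norm_sub_le _ _
        rw [hueq]
        linarith
      · have h6 : ‖A (s (n + 1))‖ ≤ C₂ * ‖s (n + 1)‖ :=
          hcs (z (n + 1)) (hzX (n + 1)) (s (n + 1)) (hs (n + 1))
        rw [hseq]
        calc ‖A (s (n + 1)) + rs‖ ≤ ‖A (s (n + 1))‖ + ‖rs‖ := norm_add_le _ _
          _ ≤ C₂ * ‖s (n + 1)‖ + Q * (η * ‖w (n + 1)‖) := by linarith
    have htri : ∀ n, ‖w n‖ ≤ ‖u n‖ + ‖s n‖ := by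
      intro n; rw [hw n]; exact norm_add_le _ _
    have hQn : ∀ n, ‖u n‖ ≤ Q * ‖w n‖ ∧ ‖s n‖ ≤ Q * ‖w n‖ := by
      intro n
      have := hproj (z n) (hzX n) (u n) (hu n) (s n) (hs n)
      rwa [← hw n] at this
    -- step lemma: cone condition propagates backwards in index direction n+1 → n
    have hstep : ∀ m, ‖s (m + 1)‖ ≤ ‖u (m + 1)‖ → ‖s m‖ ≤ ‖u m‖ := by
      intro m hgd
      have h1 := (hkey m).1
      have h2 := (hkey m).2
      have h3 : ‖w (m + 1)‖ ≤ 2 * ‖u (m + 1)‖ := by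
        have := htri (m + 1); linarith
      have h4 : Q * (η * ‖w (m + 1)‖) ≤ 2 * Q * η * ‖u (m + 1)‖ := by
        have := mul_le_mul_of_nonneg_left h3 hQη
        linarith
      have h5 := mul_le_mul_of_nonneg_right hη1 (norm_nonneg (u (m + 1)))
      have hc2 := mul_le_mul_of_nonneg_left hgd hC₂.le
      linarith
    -- cone property everywhere
    have hgood : ∀ n, ‖s n‖ ≤ ‖u n‖ := by
      by_contra hbad
      push_neg at hbad
      obtain ⟨n₀, hn₀⟩ := hbad
      have hbadall : ∀ k, ‖u (n₀ + k)‖ < ‖s (n₀ + k)‖ := by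
        intro k
        induction k with
        | zero => simpa using hn₀
        | succ k ih =>
          by_contra hcon
          push_neg at hcon
          have : ‖s (n₀ + k)‖ ≤ ‖u (n₀ + k)‖ := by
            have := hstep (n₀ + k) (by
              have e : n₀ + (k + 1) = (n₀ + k) + 1 := by ring
              rwa [e] at hcon)
            exact this
          exact absurd this (not_le.mpr ih)
      set μ : ℝ := C₂ + 2 * Q * η with hμdef
      have hμpos : 0 < μ := by rw [hμdef]; positivity
      have hμρ : μ * ρ ≤ 1 := by
        have : μ ≤ 1 / ρ := by rw [hμdef]; exact hη2
        calc μ * ρ ≤ (1 / ρ) * ρ := mul_le_mul_of_nonneg_right this hρpos.le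
          _ = 1 := by field_simp
      have hgrow : ∀ k, ‖s n₀‖ ≤ μ ^ k * ‖s (n₀ + k)‖ := by
        intro k
        induction k with
        | zero => simp
        | succ k ih =>
          have e : n₀ + (k + 1) = (n₀ + k) + 1 := by ring
          have h2 := (hkey (n₀ + k)).2
          have hb := hbadall (k + 1)
          rw [e] at hb
          have h3 : ‖w ((n₀ + k) + 1)‖ ≤ 2 * ‖s ((n₀ + k) + 1)‖ := by
            have := htri ((n₀ + k) + 1); linarith
          have h4 : Q * (η * ‖w ((n₀ + k) + 1)‖) ≤ 2 * Q * η * ‖s ((n₀ + k) + 1)‖ := by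
            have := mul_le_mul_of_nonneg_left h3 hQη
            linarith
          have h5 : ‖s (n₀ + k)‖ ≤ μ * ‖s ((n₀ + k) + 1)‖ := by
            rw [hμdef]; nlinarith [h2, h4]
          calc ‖s n₀‖ ≤ μ ^ k * ‖s (n₀ + k)‖ := ih
            _ ≤ μ ^ k * (μ * ‖s ((n₀ + k) + 1)‖) :=
                mul_le_mul_of_nonneg_left h5 (pow_nonneg hμpos.le k)
            _ = μ ^ (k + 1) * ‖s (n₀ + (k + 1))‖ := by rw [e]; ring
      have hspos : 0 < ‖s n₀‖ := lt_of_le_of_lt (norm_nonneg _) hn₀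
      set c' : ℝ := ‖s n₀‖ / (Q * ρ ^ n₀) with hc'def
      have hc' : 0 < c' := by rw [hc'def]; positivity
      have hlow : ∀ k, c' ≤ ‖w (n₀ + k)‖ / ρ ^ (n₀ + k) := by
        intro k
        have h1 : ‖s (n₀ + k)‖ ≤ Q * ‖w (n₀ + k)‖ := (hQn _).2
        have h2 : ‖s n₀‖ ≤ μ ^ k * (Q * ‖w (n₀ + k)‖) :=
          (hgrow k).trans (mul_le_mul_of_nonneg_left h1 (pow_nonneg hμpos.le k))
        have h5 : μ ^ k * ρ ^ k ≤ 1 := by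
          rw [← mul_pow]
          exact pow_le_one₀ (by positivity) hμρ
        have h4 : ‖s n₀‖ * ρ ^ k ≤ Q * ‖w (n₀ + k)‖ := by
          have hh := mul_le_mul_of_nonneg_right h2 (pow_pos hρpos k).le
          have hh2 := mul_le_mul_of_nonneg_right h5
            (mul_nonneg hQpos.le (norm_nonneg (w (n₀ + k))))
          nlinarith [hh, hh2]
        rw [hc'def, div_le_div_iff₀ (by positivity) (by positivity)]
        have e : ρ ^ (n₀ + k) = ρ ^ n₀ * ρ ^ k := pow_add ρ n₀ k
        rw [e]
        have := mul_le_mul_of_nonneg_right h4 (pow_pos hρpos n₀).le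
        nlinarith [this]
      have hev : ∀ᶠ m in atTop, dist (finv^[m] x) (finv^[m] y) / ρ ^ m < c' :=
        hten.eventually_lt_const hc'
      obtain ⟨N, hN⟩ := eventually_atTop.mp hev
      have hcontr := hN (n₀ + N) (Nat.le_add_left N n₀)
      rw [ha_eq (n₀ + N)] at hcontr
      exact absurd hcontr (not_lt.mpr (hlow N))
    -- contraction estimate
    have hexp2 : ∀ m, ‖u (m + 1)‖ * C₁' ≤ ‖u m‖ := by
      intro m
      have h1 := (hkey m).1
      have h3 : ‖w (m + 1)‖ ≤ 2 * ‖u (m + 1)‖ := by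
        have := htri (m + 1); have := hgood (m + 1); linarith
      have h4 : Q * (η * ‖w (m + 1)‖) ≤ 2 * Q * η * ‖u (m + 1)‖ := by
        have := mul_le_mul_of_nonneg_left h3 hQη
        linarith
      rw [hC₁'def]
      nlinarith [h1, h4]
    have hchain : ∀ m, C₁' ^ m * ‖u m‖ ≤ ‖u 0‖ := by
      intro m
      induction m with
      | zero => simp
      | succ m ih =>
        calc C₁' ^ (m + 1) * ‖u (m + 1)‖ = C₁' ^ m * (‖u (m + 1)‖ * C₁') := by ring
          _ ≤ C₁' ^ m * ‖u m‖ :=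
              mul_le_mul_of_nonneg_left (hexp2 m) (pow_nonneg hC₁'pos.le m)
          _ ≤ ‖u 0‖ := ih
    -- conclude
    have hz0 : dist x y = ‖w 0‖ := by
      have := ha_eq 0
      simpa using this
    rw [ha_eq n, hz0]
    have h1 : ‖w n‖ ≤ 2 * ‖u n‖ := by
      have := htri n; have := hgood n; linarith
    have h2 : ‖u n‖ ≤ ‖u 0‖ * (C₁'⁻¹) ^ n := by
      have hp : (0:ℝ) < C₁' ^ n := pow_pos hC₁'pos n
      have hc : ‖u n‖ * C₁' ^ n ≤ ‖u 0‖ := by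
        have := hchain n; linarith [hchain n, mul_comm (C₁' ^ n) (‖u n‖)]
      have := (le_div_iff₀ hp).mpr hc
      rwa [div_eq_mul_inv, ← inv_pow] at this
    have h3 : ‖u 0‖ ≤ Q * ‖w 0‖ := (hQn 0).1
    have hpn : (0:ℝ) ≤ (C₁'⁻¹) ^ n := by positivity
    calc ‖w n‖ ≤ 2 * ‖u n‖ := h1
      _ ≤ 2 * (‖u 0‖ * (C₁'⁻¹) ^ n) := by linarith
      _ ≤ 2 * ((Q * ‖w 0‖) * (C₁'⁻¹) ^ n) := by
          have := mul_le_mul_of_nonneg_right h3 hpn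
          linarith
      _ = 2 * Q * (C₁'⁻¹) ^ n * ‖w 0‖ := by ring
end
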